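/- Let p = p_n ∈ (0,1) satisfy n·p_n/log n → ∞. Then for every δ > 0, as n → ∞ the probability that G(n,p_n) has at least one edge and b(G(n,p_n)) ≤ (2+δ)·p_n·n tends to 1. -/

import Mathlib

open Filter Real Topology

noncomputable section

/-- The weight (probability) of a particular graph under the Erdős–Rényi measure `G(n,p)`. -/
def erWeight (n : ℕ) (p : ℝ) (G : SimpleGraph (Fin n)) : ℝ :=
  p ^ G.edgeSet.ncard * (1 - p) ^ (n.choose 2 - G.edgeSet.ncard)

/-- Probability of a set of graphs under the Erdős–Rényi measure `G(n,p)`. -/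
def erProb (n : ℕ) (p : ℝ) (S : Set (SimpleGraph (Fin n))) : ℝ :=
  ∑ G : SimpleGraph (Fin n), S.indicator (erWeight n p) G

/-- Expectation of a real random variable on `G(n,p)`. -/
def erExp (n : ℕ) (p : ℝ) (X : SimpleGraph (Fin n) → ℝ) : ℝ :=
  ∑ G : SimpleGraph (Fin n), erWeight n p G * X G

/-- Variance of a real random variable on `G(n,p)`. -/
def erVar (n : ℕ) (p : ℝ) (X : SimpleGraph (Fin n) → ℝ) : ℝ :=
  erExp n p (fun G => (X G - erExp n p X) ^ 2)

/-- Probability of a set of graphs under the uniform measure `G(n,m)` on graphs with `m` edges. -/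
def gnmProb (n m : ℕ) (S : Set (SimpleGraph (Fin n))) : ℝ :=
  (∑ G : SimpleGraph (Fin n),
      (S ∩ {G : SimpleGraph (Fin n) | G.edgeSet.ncard = m}).indicator 1 G) /
  (∑ G : SimpleGraph (Fin n),
      ({G : SimpleGraph (Fin n) | G.edgeSet.ncard = m} : Set (SimpleGraph (Fin n))).indicator 1 G)

/-- `D` is a dominating set of `G`. -/
def isDomSet {V : Type*} (G : SimpleGraph V) (D : Set V) : Prop :=
  ∀ v ∉ D, ∃ u ∈ D, G.Adj u v

/-- The domination number of a finite graph. -/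
def domNumber {V : Type*} [Fintype V] (G : SimpleGraph V) : ℕ :=
  sInf {k | ∃ D : Finset V, D.card = k ∧ isDomSet G ↑D}

/-- The bondage number of a finite graph. -/
def bondage {V : Type*} [Fintype V] (G : SimpleGraph V) : ℕ :=
  sInf {k | ∃ B : Finset (Sym2 V), B.card = k ∧ (↑B : Set (Sym2 V)) ⊆ G.edgeSet ∧
    domNumber G < domNumber (G.deleteEdges ↑B)}

/-- Maximum degree of a finite graph. -/
def maxDeg {V : Type*} [Fintype V] (G : SimpleGraph V) : ℕ :=
  Finset.univ.sup fun v => (G.neighborSet v).ncard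

/-- `f(n,k,p) = C(n,k)·(1−(1−p)^k)^(n−k)`, the expected number of dominating sets of size `k`. -/
def fdom (n k : ℕ) (p : ℝ) : ℝ := (n.choose k : ℝ) * (1 - (1 - p) ^ k) ^ (n - k)

/-- `r = r_n = min {k : f(n,k,p) > 1/(p n)}`. -/
def rdom (n : ℕ) (p : ℝ) : ℕ := sInf {k : ℕ | fdom n k p > 1 / (p * n)}

/-- Number of dominating sets of cardinality `k`. -/
def numDomSets (n k : ℕ) (G : SimpleGraph (Fin n)) : ℕ :=
  {D : Finset (Fin n) | D.card = k ∧ isDomSet G ↑D}.ncard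

/-- Number of dominating sets of cardinality `k` containing the vertex `v`. -/
def numDomSetsVia (n k : ℕ) (v : Fin n) (G : SimpleGraph (Fin n)) : ℕ :=
  {D : Finset (Fin n) | D.card = k ∧ v ∈ D ∧ isDomSet G ↑D}.ncard

/-- `W_i`: number of ordered pairs of dominating sets of cardinality `k` intersecting in `i`
vertices. -/
def numDomPairs (n k i : ℕ) (G : SimpleGraph (Fin n)) : ℕ :=
  {DD : Finset (Fin n) × Finset (Fin n) | DD.1.card = k ∧ DD.2.card = k ∧
    isDomSet G ↑DD.1 ∧ isDomSet G ↑DD.2 ∧ (DD.1 ∩ DD.2).card = i}.ncard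

/-- The graph `G` with the edge `uv` added (if not already present). -/
def addEdge {V : Type*} (G : SimpleGraph V) (u v : V) : SimpleGraph V :=
  G ⊔ SimpleGraph.fromEdgeSet {s(u, v)}

/-- `D̂_j(u,v)`: the number of sets `D` of cardinality `k` with `v ∈ D`, `u ∉ D`, dominating in
`G + uv`, such that `u` has exactly `j` neighbours in `D` in `G + uv`. -/
def dhat {V : Type*} [Fintype V] (G : SimpleGraph V) (k : ℕ) (u v : V) (j : ℕ) : ℕ :=
  {D : Finset V | D.card = k ∧ v ∈ D ∧ u ∉ D ∧ isDomSet (addEdge G u v) ↑D ∧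
    ((addEdge G u v).neighborSet u ∩ ↑D).ncard = j}.ncard

/-- The damage of the directed pair `(u,v)`. -/
def damage {V : Type*} [Fintype V] (G : SimpleGraph V) (k : ℕ) (u v : V) : ℝ :=
  ∑ j ∈ Finset.Icc 1 k, (dhat G k u v j : ℝ) / j

/-- The heavy damage of the directed pair `(u,v)` with threshold `L`. -/
def heavyDamage {V : Type*} [Fintype V] (G : SimpleGraph V) (k L : ℕ) (u v : V) : ℝ :=
  ∑ j ∈ Finset.Icc 1 L, (dhat G k u v j : ℝ) / j

/-- `P(Bin(m,p) = j)`. -/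
def binPMF (m : ℕ) (p : ℝ) (j : ℕ) : ℝ := (m.choose j : ℝ) * p ^ j * (1 - p) ^ (m - j)

/-- `P(Bin(m,p) < t)`. -/
def binLT (m : ℕ) (p : ℝ) (t : ℕ) : ℝ := ∑ j ∈ Finset.range t, binPMF m p j

/-- `Q_i = Σ_{j=0}^{min(i−1,L−1)} P(Bin(i−1,p)=j)·(P(Bin(r−i,p) < L−j))²`. -/
def Qdef (r L : ℕ) (p : ℝ) (i : ℕ) : ℝ :=
  ∑ j ∈ Finset.range (min i L), binPMF (i - 1) p j * (binLT (r - i) p (L - j)) ^ 2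

/-- A set of naturals is dense if `|I ∩ {1,…,n}|/n → 1`. -/
def DenseInNat (I : Set ℕ) : Prop :=
  Tendsto (fun n : ℕ => ((I ∩ Set.Icc 1 n).ncard : ℝ) / n) atTop (𝓝 1)

end

noncomputable section Aux
open Finset
open scoped Classical

abbrev EPairs (n : ℕ) := {e : Sym2 (Fin n) // ¬ e.IsDiag}

noncomputable def graphEquiv (n : ℕ) : SimpleGraph (Fin n) ≃ Finset (EPairs n) where
  toFun G := univ.filter (fun e : EPairs n => e.1 ∈ G.edgeSet)
  invFun t := SimpleGraph.fromEdgeSet {e | ∃ h : ¬ e.IsDiag, ⟨e, h⟩ ∈ t}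
  left_inv G := by
    ext a b
    simp only [SimpleGraph.fromEdgeSet_adj, Set.mem_setOf_eq, mem_filter, mem_univ, true_and]
    constructor
    · rintro ⟨⟨h, hm⟩, hab⟩
      exact hm
    · intro h
      exact ⟨⟨by simp [h.ne], h⟩, h.ne⟩
  right_inv t := by
    ext e
    simp only [mem_filter, mem_univ, true_and, SimpleGraph.edgeSet_fromEdgeSet,
      Set.mem_diff, Set.mem_setOf_eq]
    constructor
    · rintro ⟨⟨h, hm⟩, _⟩
      convert hm
    · intro h
      exact ⟨⟨e.2, by convert h⟩, e.2⟩

lemma mem_edgeSet_graphEquiv_symm {n : ℕ} (t : Finset (EPairs n)) (e : EPairs n) :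
    e.1 ∈ ((graphEquiv n).symm t).edgeSet ↔ e ∈ t := by
  show e.1 ∈ (SimpleGraph.fromEdgeSet _).edgeSet ↔ _
  rw [SimpleGraph.edgeSet_fromEdgeSet]
  simp [e.2]

lemma sum_graph_prod {n : ℕ} (a b : EPairs n → ℝ) :
    (∑ G : SimpleGraph (Fin n), ∏ e : EPairs n, (if e.1 ∈ G.edgeSet then a e else b e))
      = ∏ e : EPairs n, (a e + b e) := by
  rw [← (graphEquiv n).symm.sum_comp]
  rw [Finset.prod_add]
  rw [← Finset.powerset_univ]
  refine Finset.sum_congr rfl fun t _ => ?_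
  rw [Finset.prod_ite]
  congr 1
  · apply Finset.prod_congr _ fun _ _ => rfl
    ext e; simp [mem_edgeSet_graphEquiv_symm]
  · apply Finset.prod_congr _ fun _ _ => rfl
    ext e; simp [mem_edgeSet_graphEquiv_symm]

set_option linter.unusedSectionVars false

lemma card_epairs (n : ℕ) : Fintype.card (EPairs n) = n.choose 2 := by
  simpa using Sym2.card_subtype_not_diag (α := Fin n)

lemma card_filter_mem_edgeSet {n : ℕ} (G : SimpleGraph (Fin n)) :
    (univ.filter fun e : EPairs n => e.1 ∈ G.edgeSet).card = G.edgeSet.ncard := by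
  rw [Set.ncard_eq_toFinset_card']
  refine Finset.card_bij (fun e _ => e.1) ?_ ?_ ?_
  · intro e he; simp only [mem_filter] at he; simpa using he.2
  · intro e₁ _ e₂ _ h; exact Subtype.ext h
  · intro b hb
    rw [Set.mem_toFinset] at hb
    exact ⟨⟨b, G.not_isDiag_of_mem_edgeSet hb⟩, by simpa using hb, rfl⟩

lemma erWeight_eq_prod {n : ℕ} {p : ℝ} (G : SimpleGraph (Fin n)) :
    erWeight n p G = ∏ e : EPairs n, (if e.1 ∈ G.edgeSet then p else 1 - p) := by
  rw [Finset.prod_ite, Finset.prod_const, Finset.prod_const, card_filter_mem_edgeSet]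
  have h2 : (univ.filter fun e : EPairs n => ¬ e.1 ∈ G.edgeSet).card
      = n.choose 2 - G.edgeSet.ncard := by
    have := Finset.card_filter_add_card_filter_not
      (s := (univ : Finset (EPairs n))) (fun e : EPairs n => e.1 ∈ G.edgeSet)
    rw [card_filter_mem_edgeSet] at this
    simp only [Finset.card_univ, card_epairs] at this
    omega
  rw [h2]; rfl

lemma sum_erWeight_mul_prod {n : ℕ} {p : ℝ} (a b : EPairs n → ℝ) :
    (∑ G : SimpleGraph (Fin n),
        erWeight n p G * ∏ e : EPairs n, (if e.1 ∈ G.edgeSet then a e else b e))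
      = ∏ e : EPairs n, (p * a e + (1 - p) * b e) := by
  rw [← sum_graph_prod (fun e => p * a e) (fun e => (1 - p) * b e)]
  refine Finset.sum_congr rfl fun G _ => ?_
  rw [erWeight_eq_prod, ← Finset.prod_mul_distrib]
  refine Finset.prod_congr rfl fun e _ => ?_
  by_cases h : e.1 ∈ G.edgeSet <;> simp [h]

lemma sum_erWeight {n : ℕ} {p : ℝ} :
    (∑ G : SimpleGraph (Fin n), erWeight n p G) = 1 := by
  have := sum_erWeight_mul_prod (n := n) (p := p) (fun _ => 1) (fun _ => 1)
  simpa using this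

lemma erWeight_nonneg {n : ℕ} {p : ℝ} (h0 : 0 ≤ p) (h1 : p ≤ 1) (G : SimpleGraph (Fin n)) :
    0 ≤ erWeight n p G :=
  mul_nonneg (pow_nonneg h0 _) (pow_nonneg (by linarith) _)

section
variable {n : ℕ} {p : ℝ} (h0 : 0 ≤ p) (h1 : p ≤ 1)
include h0 h1

lemma erProb_nonneg (S : Set (SimpleGraph (Fin n))) : 0 ≤ erProb n p S :=
  Finset.sum_nonneg fun G _ => Set.indicator_nonneg (fun G _ => erWeight_nonneg h0 h1 G) G

lemma erProb_univ : erProb n p Set.univ = 1 := by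
  rw [erProb]; simp only [Set.indicator_univ]; exact sum_erWeight

lemma erProb_add_compl (S : Set (SimpleGraph (Fin n))) :
    erProb n p S + erProb n p Sᶜ = 1 := by
  rw [erProb, erProb, ← Finset.sum_add_distrib]
  calc (∑ G : SimpleGraph (Fin n),
      (S.indicator (erWeight n p) G + Sᶜ.indicator (erWeight n p) G))
      = ∑ G : SimpleGraph (Fin n), erWeight n p G := by
        refine Finset.sum_congr rfl fun G _ => ?_
        exact congrFun (Set.indicator_self_add_compl S (erWeight n p)) G
    _ = 1 := sum_erWeight

lemma erProb_mono {S T : Set (SimpleGraph (Fin n))} (h : S ⊆ T) :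
    erProb n p S ≤ erProb n p T :=
  Finset.sum_le_sum fun G _ =>
    Set.indicator_le_indicator_of_subset h (fun G => erWeight_nonneg h0 h1 G) G

lemma erProb_le_one (S : Set (SimpleGraph (Fin n))) : erProb n p S ≤ 1 := by
  rw [← erProb_univ h0 h1]; exact erProb_mono h0 h1 (Set.subset_univ S)

lemma erProb_iUnion_le {ι : Type*} [Fintype ι] (A : ι → Set (SimpleGraph (Fin n))) :
    erProb n p (⋃ i, A i) ≤ ∑ i : ι, erProb n p (A i) := by
  rw [erProb]
  calc (∑ G : SimpleGraph (Fin n), (⋃ i, A i).indicator (erWeight n p) G)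
      ≤ ∑ G : SimpleGraph (Fin n), ∑ i : ι, (A i).indicator (erWeight n p) G := by
        refine Finset.sum_le_sum fun G _ => ?_
        by_cases hG : G ∈ ⋃ i, A i
        · obtain ⟨i₀, hi₀⟩ := Set.mem_iUnion.mp hG
          rw [Set.indicator_of_mem hG]
          calc erWeight n p G = (A i₀).indicator (erWeight n p) G :=
                (Set.indicator_of_mem hi₀ _).symm
            _ ≤ ∑ i : ι, (A i).indicator (erWeight n p) G :=
                Finset.single_le_sum
                  (fun i _ => Set.indicator_nonneg (fun G _ => erWeight_nonneg h0 h1 G) G)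
                  (Finset.mem_univ i₀)
        · rw [Set.indicator_of_notMem hG]
          exact Finset.sum_nonneg fun i _ =>
            Set.indicator_nonneg (fun G _ => erWeight_nonneg h0 h1 G) G
    _ = ∑ i : ι, erProb n p (A i) := Finset.sum_comm

lemma erProb_le_erExp {S : Set (SimpleGraph (Fin n))} {X : SimpleGraph (Fin n) → ℝ}
    (hX0 : ∀ G, 0 ≤ X G) (hX1 : ∀ G ∈ S, 1 ≤ X G) : erProb n p S ≤ erExp n p X := by
  refine Finset.sum_le_sum fun G _ => ?_
  by_cases hG : G ∈ S
  · rw [Set.indicator_of_mem hG]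
    calc erWeight n p G = erWeight n p G * 1 := (mul_one _).symm
      _ ≤ erWeight n p G * X G :=
        mul_le_mul_of_nonneg_left (hX1 G hG) (erWeight_nonneg h0 h1 G)
  · rw [Set.indicator_of_notMem hG]
    exact mul_nonneg (erWeight_nonneg h0 h1 G) (hX0 G)

end

lemma card_pairs_mem {n : ℕ} (v : Fin n) :
    (univ.filter fun e : EPairs n => v ∈ e.1).card = n - 1 := by
  have : ((univ : Finset (Fin n)).erase v).card
      = (univ.filter fun e : EPairs n => v ∈ e.1).card := by
    refine Finset.card_bij (fun u hu => (⟨s(v, u), by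
      simp only [Sym2.mk_isDiag_iff]
      exact fun h => (Finset.ne_of_mem_erase hu) h.symm⟩ : EPairs n)) ?_ ?_ ?_
    · intro u hu; simp [Sym2.mem_mk_left]
    · intro u₁ _ u₂ _ h
      exact Sym2.congr_right.mp (congrArg Subtype.val h)
    · intro e he
      simp only [mem_filter, mem_univ, true_and] at he
      refine ⟨Sym2.Mem.other he, ?_, ?_⟩
      · exact Finset.mem_erase.mpr ⟨Sym2.other_ne e.2 he, Finset.mem_univ _⟩
      · exact Subtype.ext (Sym2.other_spec he)
  rw [← this, Finset.card_erase_of_mem (Finset.mem_univ v), Finset.card_univ,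
    Fintype.card_fin]

lemma ncard_neighborSet_eq {n : ℕ} (G : SimpleGraph (Fin n)) (v : Fin n) :
    (G.neighborSet v).ncard
      = (univ.filter fun e : EPairs n => v ∈ e.1 ∧ e.1 ∈ G.edgeSet).card := by
  rw [Set.ncard_eq_toFinset_card']
  refine Finset.card_bij (fun u hu => (⟨s(v, u), by
    simp only [Sym2.mk_isDiag_iff]
    intro h
    rw [Set.mem_toFinset, SimpleGraph.mem_neighborSet] at hu
    exact G.ne_of_adj hu h⟩ : EPairs n)) ?_ ?_ ?_
  · intro u hu
    rw [Set.mem_toFinset, SimpleGraph.mem_neighborSet] at hu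
    simp only [mem_filter, mem_univ, true_and]
    exact ⟨Sym2.mem_mk_left _ _, G.mem_edgeSet.mpr hu⟩
  · intro u₁ _ u₂ _ h
    exact Sym2.congr_right.mp (congrArg Subtype.val h)
  · intro e he
    simp only [mem_filter, mem_univ, true_and] at he
    obtain ⟨hv, hmem⟩ := he
    refine ⟨Sym2.Mem.other hv, ?_, Subtype.ext (Sym2.other_spec hv)⟩
    rw [Set.mem_toFinset, SimpleGraph.mem_neighborSet, ← SimpleGraph.mem_edgeSet]
    rwa [Sym2.other_spec hv]

lemma erExp_exp_deg {n : ℕ} {p : ℝ} (v : Fin n) (l : ℝ) :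
    erExp n p (fun G => Real.exp (l * ((G.neighborSet v).ncard : ℝ)))
      = (p * Real.exp l + (1 - p)) ^ (n - 1) := by
  have key : ∀ G : SimpleGraph (Fin n),
      Real.exp (l * ((G.neighborSet v).ncard : ℝ))
        = ∏ e : EPairs n,
            (if e.1 ∈ G.edgeSet then (if v ∈ e.1 then Real.exp l else 1) else 1) := by
    intro G
    have : ∀ e : EPairs n,
        (if e.1 ∈ G.edgeSet then (if v ∈ e.1 then Real.exp l else 1) else 1)
          = (if v ∈ e.1 ∧ e.1 ∈ G.edgeSet then Real.exp l else 1) := by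
      intro e
      by_cases h1 : e.1 ∈ G.edgeSet <;> by_cases h2 : v ∈ e.1 <;> simp [h1, h2]
    rw [Finset.prod_congr rfl (fun e _ => this e), Finset.prod_ite, Finset.prod_const,
      Finset.prod_const, one_pow, mul_one, ncard_neighborSet_eq, mul_comm,
      ← Real.exp_nat_mul]
  unfold erExp
  simp only
  rw [Finset.sum_congr rfl (fun G _ => by rw [key G]), sum_erWeight_mul_prod]
  have : ∀ e : EPairs n,
      p * (if v ∈ e.1 then Real.exp l else 1) + (1 - p) * 1
        = if v ∈ e.1 then p * Real.exp l + (1 - p) else 1 := by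
    intro e; split <;> ring
  rw [Finset.prod_congr rfl (fun e _ => this e), Finset.prod_ite, Finset.prod_const,
    Finset.prod_const, one_pow, mul_one, card_pairs_mem]


section Bondage
variable {V : Type*} [Fintype V] [DecidableEq V]

lemma domSet_nonempty (G : SimpleGraph V) :
    {k | ∃ D : Finset V, D.card = k ∧ isDomSet G ↑D}.Nonempty :=
  ⟨(univ : Finset V).card, univ, rfl, fun v hv => absurd (Finset.mem_coe.mpr (mem_univ v)) hv⟩

lemma exists_min_domSet (G : SimpleGraph V) :
    ∃ D : Finset V, D.card = domNumber G ∧ isDomSet G ↑D :=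
  Nat.sInf_mem (domSet_nonempty G)

lemma domNumber_le_card (G : SimpleGraph V) {D : Finset V} (hD : isDomSet G ↑D) :
    domNumber G ≤ D.card :=
  Nat.sInf_le ⟨D, rfl, hD⟩

lemma isDomSet_of_deleteEdges (G : SimpleGraph V) (s : Set (Sym2 V)) {D : Set V}
    (hD : isDomSet (G.deleteEdges s) D) : isDomSet G D := by
  intro v hv
  obtain ⟨u, hu, hadj⟩ := hD v hv
  exact ⟨u, hu, (SimpleGraph.deleteEdges_adj.mp hadj).1⟩

lemma bondage_le_of_adj (G : SimpleGraph V) [DecidableRel G.Adj] {u v : V} (huv : G.Adj u v) :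
    bondage G ≤ G.degree u + G.degree v - 1 := by
  classical
  set B : Finset (Sym2 V) := G.incidenceFinset u ∪ (G.incidenceFinset v).erase s(u, v) with hB
  have hcard : B.card ≤ G.degree u + G.degree v - 1 := by
    have h1 : s(u, v) ∈ G.incidenceFinset v := by
      rw [SimpleGraph.mem_incidenceFinset]
      exact ⟨G.mem_edgeSet.mpr huv, Sym2.mem_mk_right u v⟩
    have h2 := Finset.card_union_le (G.incidenceFinset u) ((G.incidenceFinset v).erase s(u, v))
    rw [← hB, Finset.card_erase_of_mem h1] at h2
    have h3 : 1 ≤ G.degree v := by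
      rw [← SimpleGraph.card_incidenceFinset_eq_degree]
      exact Finset.card_pos.mpr ⟨s(u, v), h1⟩
    rw [SimpleGraph.card_incidenceFinset_eq_degree, SimpleGraph.card_incidenceFinset_eq_degree]
      at h2
    omega
  have hsub : (↑B : Set (Sym2 V)) ⊆ G.edgeSet := by
    intro e he
    rw [Finset.mem_coe, hB, Finset.mem_union] at he
    rcases he with he | he
    · exact G.incidenceSet_subset u ((SimpleGraph.mem_incidenceFinset _ _ _).mp he)
    · exact G.incidenceSet_subset v
        ((SimpleGraph.mem_incidenceFinset _ _ _).mp (Finset.mem_of_mem_erase he))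
  set H := G.deleteEdges ↑B with hH
  have hisou : ∀ w, ¬ H.Adj u w := by
    intro w h
    obtain ⟨hadj, hnot⟩ := SimpleGraph.deleteEdges_adj.mp h
    refine hnot ?_
    rw [Finset.mem_coe, hB, Finset.mem_union]
    exact Or.inl ((SimpleGraph.mem_incidenceFinset _ _ _).mpr
      ⟨G.mem_edgeSet.mpr hadj, Sym2.mem_mk_left u w⟩)
  have hisov : ∀ w, ¬ H.Adj v w := by
    intro w h
    obtain ⟨hadj, hnot⟩ := SimpleGraph.deleteEdges_adj.mp h
    refine hnot ?_
    rw [Finset.mem_coe, hB, Finset.mem_union]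
    by_cases hw : w = u
    · refine Or.inl ((SimpleGraph.mem_incidenceFinset _ _ _).mpr
        ⟨G.mem_edgeSet.mpr hadj, by rw [hw]; exact Sym2.mem_mk_right v u⟩)
    · refine Or.inr (Finset.mem_erase.mpr ⟨?_, (SimpleGraph.mem_incidenceFinset _ _ _).mpr
        ⟨G.mem_edgeSet.mpr hadj, Sym2.mem_mk_left v w⟩⟩)
      intro hvw
      rcases Sym2.eq_iff.mp hvw with ⟨h1, _⟩ | ⟨_, h2⟩
      · exact G.ne_of_adj huv h1.symm
      · exact hw h2
  have hdomlt : domNumber G < domNumber H := by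
    obtain ⟨D, hDcard, hDdom⟩ := exists_min_domSet H
    have huD : u ∈ D := by
      by_contra hu
      obtain ⟨x, _, hadj⟩ := hDdom u (by simpa using hu)
      exact hisou x hadj.symm
    have hvD : v ∈ D := by
      by_contra hv
      obtain ⟨x, _, hadj⟩ := hDdom v (by simpa using hv)
      exact hisov x hadj.symm
    have hD' : isDomSet G ↑(D.erase v) := by
      intro w hw
      rw [Finset.mem_coe, Finset.mem_erase, not_and_or, not_not] at hw
      rcases hw with hw | hw
      · subst hw
        exact ⟨u, Finset.mem_coe.mpr (Finset.mem_erase.mpr ⟨G.ne_of_adj huv, huD⟩), huv⟩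
      · obtain ⟨x, hx, hadj⟩ := hDdom w (by simpa using hw)
        have hxv : x ≠ v := by
          intro h; subst h; exact hisov w hadj
        refine ⟨x, Finset.mem_coe.mpr (Finset.mem_erase.mpr ⟨hxv, by simpa using hx⟩),
          (SimpleGraph.deleteEdges_adj.mp hadj).1⟩
    have h1 : domNumber G ≤ (D.erase v).card := domNumber_le_card G hD'
    rw [Finset.card_erase_of_mem hvD] at h1
    have h2 : 1 ≤ D.card := Finset.card_pos.mpr ⟨u, huD⟩
    omega
  calc bondage G ≤ B.card := Nat.sInf_le ⟨B, rfl, hsub, hdomlt⟩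
    _ ≤ G.degree u + G.degree v - 1 := hcard

lemma ncard_neighborSet_eq_degree (G : SimpleGraph V) [DecidableRel G.Adj] (v : V) :
    (G.neighborSet v).ncard = G.degree v := by
  rw [Set.ncard_eq_toFinset_card']
  rfl

end Bondage

lemma exp_le_one_add_add_sq {l : ℝ} (hl0 : 0 ≤ l) (hl1 : l ≤ 1) :
    Real.exp l ≤ 1 + l + l ^ 2 := by
  have h := Real.exp_bound (x := l) (by rw [abs_of_nonneg hl0]; exact hl1) (n := 2) (by norm_num)
  have h2 : ∑ m ∈ Finset.range 2, l ^ m / (m.factorial : ℝ) = 1 + l := by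
    simp [Finset.sum_range_succ]
  rw [h2, abs_of_nonneg hl0] at h
  have h3 := (abs_le.mp h).2
  norm_num [Nat.factorial] at h3
  nlinarith [h3, sq_nonneg l]

lemma chernoff_deg {n : ℕ} {p : ℝ} (hp : 0 < p) (hp1 : p ≤ 1) (v : Fin n) {l ε : ℝ}
    (hl0 : 0 < l) (hl1 : l ≤ 1) (hlε : l ≤ ε / 2) :
    erProb n p {G : SimpleGraph (Fin n) | (1 + ε) * (p * n) < ((G.neighborSet v).ncard : ℝ)}
      ≤ Real.exp (-(l * ε / 2) * (p * n)) := by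
  have hε : 0 < ε := by linarith
  have hpn0 : (0 : ℝ) ≤ p * n := mul_nonneg hp.le (Nat.cast_nonneg n)
  set c : ℝ := (1 + ε) * (p * n) with hc
  set X : SimpleGraph (Fin n) → ℝ :=
    fun G => Real.exp (l * (((G.neighborSet v).ncard : ℝ) - c)) with hX
  have step1 : erProb n p {G : SimpleGraph (Fin n) | c < ((G.neighborSet v).ncard : ℝ)}
      ≤ erExp n p X := by
    refine erProb_le_erExp hp.le hp1 (fun G => (Real.exp_pos _).le) (fun G hG => ?_)
    rw [Set.mem_setOf_eq] at hG
    exact Real.one_le_exp (mul_nonneg hl0.le (by linarith))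
  have step2 : erExp n p X
      = Real.exp (-(l * c)) * (p * Real.exp l + (1 - p)) ^ (n - 1) := by
    have : erExp n p X = Real.exp (-(l * c)) *
        erExp n p (fun G => Real.exp (l * ((G.neighborSet v).ncard : ℝ))) := by
      unfold erExp
      rw [Finset.mul_sum]
      refine Finset.sum_congr rfl fun G _ => ?_
      show erWeight n p G * Real.exp (l * (((G.neighborSet v).ncard : ℝ) - c))
        = Real.exp (-(l * c)) * (erWeight n p G * Real.exp (l * ((G.neighborSet v).ncard : ℝ)))
      rw [show l * (((G.neighborSet v).ncard : ℝ) - c)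
        = -(l * c) + l * ((G.neighborSet v).ncard : ℝ) by ring, Real.exp_add]
      ring
    rw [this, erExp_exp_deg]
  have hbase0 : (0 : ℝ) ≤ p * Real.exp l + (1 - p) := by
    have := (Real.exp_pos l).le
    nlinarith
  have step3 : (p * Real.exp l + (1 - p)) ^ (n - 1)
      ≤ Real.exp (p * (Real.exp l - 1)) ^ (n - 1) := by
    refine pow_le_pow_left₀ hbase0 ?_ _
    have := Real.add_one_le_exp (p * (Real.exp l - 1))
    linarith
  have step4 : Real.exp (p * (Real.exp l - 1)) ^ (n - 1)
      ≤ Real.exp ((n : ℝ) * (p * (Real.exp l - 1))) := by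
    rw [← Real.exp_nat_mul]
    refine Real.exp_le_exp.mpr ?_
    have h1 : ((n - 1 : ℕ) : ℝ) ≤ (n : ℝ) := Nat.cast_le.mpr (n.sub_le 1)
    have h2 : (0 : ℝ) ≤ p * (Real.exp l - 1) :=
      mul_nonneg hp.le (by linarith [Real.one_le_exp hl0.le])
    exact mul_le_mul_of_nonneg_right h1 h2
  have hexp : Real.exp l - 1 ≤ l * (1 + ε / 2) := by
    have := exp_le_one_add_add_sq hl0.le hl1
    nlinarith
  have step5 : Real.exp (-(l * c)) * Real.exp ((n : ℝ) * (p * (Real.exp l - 1)))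
      ≤ Real.exp (-(l * ε / 2) * (p * n)) := by
    rw [← Real.exp_add]
    refine Real.exp_le_exp.mpr ?_
    have h1 : (n : ℝ) * (p * (Real.exp l - 1)) ≤ (p * n) * (l * (1 + ε / 2)) := by
      have : (n : ℝ) * (p * (Real.exp l - 1)) = (p * n) * (Real.exp l - 1) := by ring
      rw [this]
      exact mul_le_mul_of_nonneg_left hexp hpn0
    rw [hc]
    nlinarith
  calc erProb n p {G : SimpleGraph (Fin n) | c < ((G.neighborSet v).ncard : ℝ)}
      ≤ erExp n p X := step1
    _ = Real.exp (-(l * c)) * (p * Real.exp l + (1 - p)) ^ (n - 1) := step2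
    _ ≤ Real.exp (-(l * c)) * Real.exp (p * (Real.exp l - 1)) ^ (n - 1) :=
        mul_le_mul_of_nonneg_left step3 (Real.exp_pos _).le
    _ ≤ Real.exp (-(l * c)) * Real.exp ((n : ℝ) * (p * (Real.exp l - 1))) :=
        mul_le_mul_of_nonneg_left step4 (Real.exp_pos _).le
    _ ≤ Real.exp (-(l * ε / 2) * (p * n)) := step5

lemma noedge_bound {n : ℕ} {p : ℝ} (hp : 0 < p) (hp1 : p ≤ 1) :
    erProb n p {G : SimpleGraph (Fin n) | ¬ G.edgeSet.Nonempty}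
      ≤ Real.exp (-p * (n.choose 2 : ℕ)) := by
  set X : SimpleGraph (Fin n) → ℝ :=
    fun G => ∏ e : EPairs n, (if e.1 ∈ G.edgeSet then 0 else 1) with hX
  have step1 : erProb n p {G : SimpleGraph (Fin n) | ¬ G.edgeSet.Nonempty} ≤ erExp n p X := by
    refine erProb_le_erExp hp.le hp1 (fun G => Finset.prod_nonneg fun e _ => by positivity)
      (fun G hG => ?_)
    rw [Set.mem_setOf_eq, Set.not_nonempty_iff_eq_empty] at hG
    show (1:ℝ) ≤ ∏ e : EPairs n, (if e.1 ∈ G.edgeSet then (0:ℝ) else 1)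
    rw [Finset.prod_congr rfl (fun e _ => if_neg (by rw [hG]; exact Set.notMem_empty _))]
    simp
  have step2 : erExp n p X = (1 - p) ^ (n.choose 2) := by
    unfold erExp
    rw [hX]
    rw [sum_erWeight_mul_prod (fun _ => 0) (fun _ => 1)]
    have h4 : ∀ e : EPairs n, p * 0 + (1 - p) * 1 = 1 - p := fun _ => by ring
    rw [Finset.prod_congr rfl (fun e _ => h4 e), Finset.prod_const, Finset.card_univ,
      card_epairs]
  have step3 : (1 - p) ^ (n.choose 2) ≤ Real.exp (-p * (n.choose 2 : ℕ)) := by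
    rw [show -p * (n.choose 2 : ℕ) = ((n.choose 2 : ℕ) : ℝ) * (-p) by ring, Real.exp_nat_mul]
    refine pow_le_pow_left₀ (by linarith) ?_ _
    have := Real.add_one_le_exp (-p)
    linarith
  calc erProb n p {G : SimpleGraph (Fin n) | ¬ G.edgeSet.Nonempty} ≤ erExp n p X := step1
    _ = (1 - p) ^ (n.choose 2) := step2
    _ ≤ Real.exp (-p * (n.choose 2 : ℕ)) := step3

lemma erProb_union_le' {n : ℕ} {p : ℝ} (h0 : 0 ≤ p) (h1 : p ≤ 1)
    (S T : Set (SimpleGraph (Fin n))) :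
    erProb n p (S ∪ T) ≤ erProb n p S + erProb n p T := by
  unfold erProb
  rw [← Finset.sum_add_distrib]
  refine Finset.sum_le_sum fun G _ => ?_
  by_cases hG : G ∈ S ∪ T
  · rw [Set.indicator_of_mem hG]
    rcases hG with hG | hG
    · rw [Set.indicator_of_mem hG]
      have : 0 ≤ T.indicator (erWeight n p) G :=
        Set.indicator_nonneg (fun G _ => erWeight_nonneg h0 h1 G) G
      linarith
    · rw [Set.indicator_of_mem (hG : G ∈ T)]
      have : 0 ≤ S.indicator (erWeight n p) G :=
        Set.indicator_nonneg (fun G _ => erWeight_nonneg h0 h1 G) G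
      linarith
  · rw [Set.indicator_of_notMem hG]
    have h2 : 0 ≤ S.indicator (erWeight n p) G :=
      Set.indicator_nonneg (fun G _ => erWeight_nonneg h0 h1 G) G
    have h3 : 0 ≤ T.indicator (erWeight n p) G :=
      Set.indicator_nonneg (fun G _ => erWeight_nonneg h0 h1 G) G
    linarith

end Aux

/-- If `n p_n / log n → ∞`, then for every `δ > 0`, a.a.s. `G(n,p_n)` has an
edge and `b(G(n,p_n)) ≤ (2+δ) p_n n`. -/
theorem bondage_trivial_upper (p : ℕ → ℝ) (hp01 : ∀ n, p n ∈ Set.Ioo (0 : ℝ) 1)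
    (hp : Tendsto (fun n : ℕ => (n : ℝ) * p n / Real.log n) atTop atTop)
    (δ : ℝ) (hδ : 0 < δ) :
    Tendsto (fun n : ℕ => erProb n (p n)
        {G : SimpleGraph (Fin n) |
          G.edgeSet.Nonempty ∧ (bondage G : ℝ) ≤ (2 + δ) * p n * n})
      atTop (𝓝 1) := by
  classical
  set l : ℝ := min (δ / 4) 1 with hl
  have hl0 : 0 < l := lt_min (by linarith) one_pos
  have hl1 : l ≤ 1 := min_le_right _ _
  have hlε : l ≤ (δ / 2) / 2 := by
    have := min_le_left (δ / 4) 1; linarith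
  set c : ℝ := l * (δ / 2) / 2 with hc
  have hc0 : 0 < c := by positivity
  set bad : ℕ → ℝ := fun n =>
    Real.exp (-(p n) * ((n.choose 2 : ℕ) : ℝ)) + n * Real.exp (-c * (p n * n)) with hbaddef
  have key : ∀ n : ℕ, 1 - bad n ≤ erProb n (p n)
      {G : SimpleGraph (Fin n) |
        G.edgeSet.Nonempty ∧ (bondage G : ℝ) ≤ (2 + δ) * p n * n} := by
    intro n
    obtain ⟨hp0, hp1⟩ := hp01 n
    set S : Set (SimpleGraph (Fin n)) :=
      {G | G.edgeSet.Nonempty ∧ (bondage G : ℝ) ≤ (2 + δ) * p n * n} with hS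
    have hsub : Sᶜ ⊆ {G : SimpleGraph (Fin n) | ¬ G.edgeSet.Nonempty}
        ∪ ⋃ v : Fin n,
          {G : SimpleGraph (Fin n) | (1 + δ / 2) * (p n * n) < ((G.neighborSet v).ncard : ℝ)} := by
      intro G hG
      rw [Set.mem_compl_iff, hS, Set.mem_setOf_eq, not_and_or] at hG
      by_cases hedge : G.edgeSet.Nonempty
      · rcases hG with h | h
        · exact absurd hedge h
        refine Or.inr ?_
        by_contra hdeg
        rw [Set.mem_iUnion] at hdeg
        push_neg at hdeg
        have hdegv : ∀ v : Fin n, ((G.neighborSet v).ncard : ℝ) ≤ (1 + δ / 2) * (p n * n) := by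
          intro v
          have := hdeg v
          rw [Set.mem_setOf_eq] at this
          linarith [not_lt.mp this]
        obtain ⟨e, he⟩ := hedge
        refine h ?_
        induction e using Sym2.ind with
        | _ u v =>
          have huv : G.Adj u v := G.mem_edgeSet.mp he
          have hb := bondage_le_of_adj G huv
          have hb2 : bondage G ≤ G.degree u + G.degree v := le_trans hb (Nat.sub_le _ _)
          have hb3 : (bondage G : ℝ) ≤ (G.degree u : ℝ) + (G.degree v : ℝ) := by
            have := (Nat.cast_le (α := ℝ)).mpr hb2; push_cast at this; linarith
          rw [← ncard_neighborSet_eq_degree, ← ncard_neighborSet_eq_degree] at hb3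
          have hring : (2 + δ) * p n * (n : ℝ) = 2 * ((1 + δ / 2) * (p n * n)) := by ring
          rw [hring]
          linarith [hdegv u, hdegv v]
      · exact Or.inl hedge
    have hUB : erProb n (p n) Sᶜ ≤ bad n := by
      calc erProb n (p n) Sᶜ
          ≤ erProb n (p n) ({G : SimpleGraph (Fin n) | ¬ G.edgeSet.Nonempty}
            ∪ ⋃ v : Fin n, {G : SimpleGraph (Fin n) |
                (1 + δ / 2) * (p n * n) < ((G.neighborSet v).ncard : ℝ)}) :=
            erProb_mono hp0.le hp1.le hsub
        _ ≤ erProb n (p n) {G : SimpleGraph (Fin n) | ¬ G.edgeSet.Nonempty}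
            + erProb n (p n) (⋃ v : Fin n, {G : SimpleGraph (Fin n) |
                (1 + δ / 2) * (p n * n) < ((G.neighborSet v).ncard : ℝ)}) :=
            erProb_union_le' hp0.le hp1.le _ _
        _ ≤ Real.exp (-(p n) * ((n.choose 2 : ℕ) : ℝ))
            + ∑ v : Fin n, erProb n (p n) {G : SimpleGraph (Fin n) |
                (1 + δ / 2) * (p n * n) < ((G.neighborSet v).ncard : ℝ)} := by
            refine add_le_add (noedge_bound hp0 hp1.le) (erProb_iUnion_le hp0.le hp1.le _)
        _ ≤ Real.exp (-(p n) * ((n.choose 2 : ℕ) : ℝ))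
            + ∑ v : Fin n, Real.exp (-(l * (δ / 2) / 2) * (p n * n)) := by
            refine add_le_add le_rfl (Finset.sum_le_sum fun v _ => ?_)
            exact chernoff_deg hp0 hp1.le v hl0 hl1 hlε
        _ = bad n := by
            rw [Finset.sum_const, Finset.card_univ, Fintype.card_fin, nsmul_eq_mul, hbaddef, hc]
    have hcompl := erProb_add_compl hp0.le hp1.le S
    linarith
  have hbad0 : ∀ n, 0 ≤ bad n := by
    intro n
    have h1 := (Real.exp_pos (-(p n) * ((n.choose 2 : ℕ) : ℝ))).le
    have h2 := (Real.exp_pos (-c * (p n * n))).le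
    positivity
  have hbadle : ∀ᶠ n : ℕ in atTop, bad n ≤ 2 / n := by
    filter_upwards [hp.eventually_ge_atTop (max (2 / c) 1), Filter.eventually_ge_atTop 3]
      with n hM hn3
    obtain ⟨hp0, hp1⟩ := hp01 n
    have hn0 : (0 : ℝ) < n := by
      have : (3 : ℝ) ≤ (n : ℝ) := by exact_mod_cast hn3
      linarith
    have hlogpos : 0 < Real.log n := by
      rw [Real.lt_log_iff_exp_lt hn0]
      calc Real.exp 0 = 1 := Real.exp_zero
        _ < 3 := by norm_num
        _ ≤ n := by exact_mod_cast hn3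
    have h1' : Real.log n ≤ (n : ℝ) * p n := by
      have := le_trans (le_max_right (2 / c) 1) hM
      rw [le_div_iff₀ hlogpos] at this
      linarith
    have h2' : 2 * Real.log n ≤ c * ((n : ℝ) * p n) := by
      have := le_trans (le_max_left (2 / c) 1) hM
      rw [div_le_div_iff₀ hc0 hlogpos] at this
      linarith [mul_comm c ((n : ℝ) * p n), this]
    have hchoose : (n : ℝ) ≤ ((n.choose 2 : ℕ) : ℝ) := by
      have : n ≤ n.choose 2 := by
        rw [Nat.choose_two_right, Nat.le_div_iff_mul_le (by norm_num)]
        have : 2 ≤ n - 1 := by omega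
        calc n * 2 ≤ n * (n - 1) := Nat.mul_le_mul_left n this
          _ = n * (n - 1) := rfl
      exact_mod_cast this
    have hterm1 : Real.exp (-(p n) * ((n.choose 2 : ℕ) : ℝ)) ≤ 1 / n := by
      have hle : Real.log n ≤ p n * ((n.choose 2 : ℕ) : ℝ) := by
        calc Real.log n ≤ (n : ℝ) * p n := h1'
          _ = p n * (n : ℝ) := by ring
          _ ≤ p n * ((n.choose 2 : ℕ) : ℝ) := mul_le_mul_of_nonneg_left hchoose hp0.le
      calc Real.exp (-(p n) * ((n.choose 2 : ℕ) : ℝ)) ≤ Real.exp (-Real.log n) :=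
          Real.exp_le_exp.mpr (by linarith)
        _ = 1 / n := by rw [Real.exp_neg, Real.exp_log hn0, one_div]
    have hterm2 : (n : ℝ) * Real.exp (-c * (p n * n)) ≤ 1 / n := by
      have hle : 2 * Real.log n ≤ c * (p n * n) := by
        have : c * ((n : ℝ) * p n) = c * (p n * n) := by ring
        linarith [h2']
      calc (n : ℝ) * Real.exp (-c * (p n * n))
          ≤ (n : ℝ) * Real.exp (-(2 * Real.log n)) :=
            mul_le_mul_of_nonneg_left (Real.exp_le_exp.mpr (by linarith)) hn0.le
        _ = 1 / n := by
            rw [show -(2 * Real.log (n : ℝ)) = -(Real.log n + Real.log n) by ring,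
              Real.exp_neg, Real.exp_add, Real.exp_log hn0]
            field_simp
    rw [hbaddef]
    have : 2 / (n : ℝ) = 1 / n + 1 / n := by ring
    rw [this]
    exact add_le_add hterm1 hterm2
  have hbadtend : Tendsto bad atTop (𝓝 0) := by
    refine tendsto_of_tendsto_of_tendsto_of_le_of_le' tendsto_const_nhds
      (tendsto_const_div_atTop_nhds_zero_nat 2) (Filter.Eventually.of_forall hbad0) hbadle
  refine tendsto_of_tendsto_of_tendsto_of_le_of_le'
    (g := fun n : ℕ => 1 - bad n) (h := fun _ : ℕ => (1 : ℝ)) ?_ tendsto_const_nhds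
    (Filter.Eventually.of_forall key) (Filter.Eventually.of_forall fun n =>
      erProb_le_one (hp01 n).1.le (hp01 n).2.le _)
  simpa using tendsto_const_nhds.sub hbadtend
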